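/- arXiv:2010.12102 — 3 statements merged into one kernel-verified Lean document; each statement's English description precedes it below -/
import Mathlib

section
/- (Elliptical potential lemma; Lemma 11 of Abbasi-Yadkori et al., used as Lemma 3 in the paper.) Let λ ≥ max(1, L²), let x_1, …, x_T ∈ ℝ^d satisfy ‖x_t‖₂ ≤ L for all t, and define A_t = λ I_d + Σ_{i=1}^t x_i x_iᵀ (so A_0 = λ I_d). Then Σ_{t=1}^T x_tᵀ A_{t-1}⁻¹ x_t ≤ 2 log( det(A_T) / λ^d ). -/
open Matrix Finset

private lemma psd_vecMulVec {n : Type*} [Fintype n] (v : n → ℝ) :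
    (vecMulVec v v).PosSemidef := by
  have h : (replicateRow Unit v)ᴴ = replicateCol Unit v := by
    ext i j
    simp
  rw [vecMulVec_eq Unit, ← h]
  exact posSemidef_conjTranspose_mul_self _

private lemma psd_sum {n : Type*} [Fintype n] (s : Finset ℕ) (x : ℕ → n → ℝ) :
    (∑ i ∈ s, vecMulVec (x i) (x i)).PosSemidef := by
  classical
  induction s using Finset.induction with
  | empty => simpa using Matrix.PosSemidef.zero
  | insert _ _ h ih => rw [Finset.sum_insert h]; exact (psd_vecMulVec _).add ih

private lemma pd_smul_one {n : Type*} [Fintype n] [DecidableEq n] {lam : ℝ} (h : 0 < lam) :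
    (lam • (1 : Matrix n n ℝ)).PosDef := by
  rw [smul_one_eq_diagonal]
  exact Matrix.PosDef.diagonal fun _ => h

private lemma sum_Icc_one (T : ℕ) (g : ℕ → ℝ) :
    ∑ t ∈ Finset.Icc 1 T, g t = ∑ i ∈ Finset.range T, g (i + 1) := by
  induction T with
  | zero => simp
  | succ n ih => rw [Finset.sum_Icc_succ_top (Nat.le_add_left 1 n), ih, Finset.sum_range_succ]

private lemma det_rank_one {d : ℕ} (B : Matrix (Fin d) (Fin d) ℝ) (v : Fin d → ℝ)
    (hB : IsUnit B.det) :
    (B + vecMulVec v v).det = B.det * (1 + v ⬝ᵥ (B⁻¹ *ᵥ v)) := by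
  rw [vecMulVec_eq Unit, det_add_replicateCol_mul_replicateRow hB]
  congr 1
  rw [det_unique]
  simp only [Matrix.add_apply, Matrix.one_apply_eq, Matrix.mul_apply, Matrix.replicateRow_apply,
    Matrix.replicateCol_apply, mulVec, dotProduct, Finset.sum_mul, Finset.mul_sum]
  rw [Finset.sum_comm]
  ring_nf

/-- Elliptical potential lemma (Lemma 11 of Abbasi-Yadkori et al.):
if `λ ≥ max 1 L²`, `‖x_t‖₂ ≤ L` for `t = 1, …, T`, and
`A_t = λ I + ∑_{i=1}^t x_i x_iᵀ`, then
`∑_{t=1}^T x_tᵀ A_{t-1}⁻¹ x_t ≤ 2 log (det A_T / λ^d)`. -/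
theorem elliptical_potential {d : ℕ} (T : ℕ) (L lam : ℝ)
    (hlam : max 1 (L ^ 2) ≤ lam)
    (x : ℕ → Fin d → ℝ)
    (hx : ∀ t ∈ Finset.Icc 1 T, Real.sqrt (x t ⬝ᵥ x t) ≤ L)
    (A : ℕ → Matrix (Fin d) (Fin d) ℝ)
    (hA : ∀ t, A t = lam • (1 : Matrix (Fin d) (Fin d) ℝ)
        + ∑ i ∈ Finset.Icc 1 t, vecMulVec (x i) (x i)) :
    ∑ t ∈ Finset.Icc 1 T, x t ⬝ᵥ ((A (t - 1))⁻¹ *ᵥ x t)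
      ≤ 2 * Real.log ((A T).det / lam ^ d) := by
  classical
  have hlam1 : (1 : ℝ) ≤ lam := le_trans (le_max_left _ _) hlam
  have hlam0 : (0 : ℝ) < lam := lt_of_lt_of_le one_pos hlam1
  have hL2 : L ^ 2 ≤ lam := le_trans (le_max_right _ _) hlam
  have hpd : ∀ t, (A t).PosDef := by
    intro t
    rw [hA t]
    exact (pd_smul_one hlam0).add_posSemidef (psd_sum _ _)
  have hdetpos : ∀ t, 0 < (A t).det := fun t => (hpd t).det_pos
  set f : ℕ → ℝ := fun t => Real.log ((A t).det) with hf
  -- per-step bound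
  have step : ∀ t ∈ Finset.Icc 1 T,
      x t ⬝ᵥ ((A (t - 1))⁻¹ *ᵥ x t) ≤ 2 * (f t - f (t - 1)) := by
    intro t ht
    have ht' := Finset.mem_Icc.mp ht
    obtain ⟨m, rfl⟩ : ∃ m, t = m + 1 := ⟨t - 1, (Nat.succ_pred_eq_of_pos ht'.1).symm⟩
    have hm1 : m + 1 - 1 = m := rfl
    rw [hm1]
    set B := A m with hB
    set v := x (m + 1) with hv
    set u := B⁻¹ *ᵥ v with hu
    set s := v ⬝ᵥ u with hs
    have hBdet : IsUnit B.det := isUnit_iff_ne_zero.mpr (hdetpos m).ne'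
    have hBu : B *ᵥ u = v := by
      rw [hu, mulVec_mulVec, Matrix.mul_nonsing_inv _ hBdet, one_mulVec]
    -- s is nonnegative
    have s0 : 0 ≤ s := by
      have := ((hpd m).inv).posSemidef.dotProduct_mulVec_nonneg v
      simpa [hs, hu] using this
    -- quadratic form lower bound : lam * (u ⬝ᵥ u) ≤ s
    have hquad : lam * (u ⬝ᵥ u) ≤ s := by
      have h1 : s = u ⬝ᵥ (B *ᵥ u) := by
        rw [hBu, hs, dotProduct_comm]
      have h2 : u ⬝ᵥ (B *ᵥ u)
          = lam * (u ⬝ᵥ u) + u ⬝ᵥ ((∑ i ∈ Finset.Icc 1 m, vecMulVec (x i) (x i)) *ᵥ u) := by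
        rw [hB, hA m, add_mulVec, dotProduct_add, smul_mulVec, one_mulVec,
          dotProduct_smul, smul_eq_mul]
      have h3 : 0 ≤ u ⬝ᵥ ((∑ i ∈ Finset.Icc 1 m, vecMulVec (x i) (x i)) *ᵥ u) := by
        have := (psd_sum (Finset.Icc 1 m) x).dotProduct_mulVec_nonneg u
        simpa using this
      linarith [h1, h2, h3]
    -- Cauchy-Schwarz
    have hCS : s ^ 2 ≤ (v ⬝ᵥ v) * (u ⬝ᵥ u) := by
      have := Finset.sum_mul_sq_le_sq_mul_sq Finset.univ v u
      calc s ^ 2 = (∑ i, v i * u i) ^ 2 := by rw [hs]; rfl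
        _ ≤ (∑ i, v i ^ 2) * (∑ i, u i ^ 2) := this
        _ = (v ⬝ᵥ v) * (u ⬝ᵥ u) := by simp [dotProduct, sq]
    have huu : 0 ≤ u ⬝ᵥ u := by
      simp only [dotProduct]
      exact Finset.sum_nonneg fun i _ => mul_self_nonneg _
    -- bound on the norm of v
    have hvv : v ⬝ᵥ v ≤ lam := by
      have hvv0 : 0 ≤ v ⬝ᵥ v := by
        simp only [dotProduct]
        exact Finset.sum_nonneg fun i _ => mul_self_nonneg _
      have hsq := hx (m + 1) ht
      have : v ⬝ᵥ v = Real.sqrt (v ⬝ᵥ v) ^ 2 := (Real.sq_sqrt hvv0).symm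
      rw [this]
      calc Real.sqrt (v ⬝ᵥ v) ^ 2 ≤ L ^ 2 :=
            pow_le_pow_left₀ (Real.sqrt_nonneg _) hsq 2
        _ ≤ lam := hL2
    -- s ≤ 1
    have s1 : s ≤ 1 := by
      have hss : s ^ 2 ≤ s := by
        calc s ^ 2 ≤ (v ⬝ᵥ v) * (u ⬝ᵥ u) := hCS
          _ ≤ lam * (u ⬝ᵥ u) := mul_le_mul_of_nonneg_right hvv huu
          _ ≤ s := hquad
      nlinarith [sq_nonneg (s - 1)]
    -- determinant recursion
    have hrec : (A (m + 1)).det = B.det * (1 + s) := by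
      have hstep : A (m + 1) = B + vecMulVec v v := by
        rw [hB, hA (m + 1), hA m, Finset.sum_Icc_succ_top (Nat.le_add_left 1 m), add_assoc]
      rw [hstep, det_rank_one B v hBdet, hs, hu]
    -- log step
    have hlog : f (m + 1) - f m = Real.log (1 + s) := by
      have h1s : (0 : ℝ) < 1 + s := by linarith
      rw [hf]
      simp only
      rw [hrec, Real.log_mul (hdetpos m).ne' h1s.ne']
      ring
    rw [hlog]
    -- s ≤ 2 log (1 + s)
    have h1s : (0 : ℝ) < 1 + s := by linarith
    have hloglb := Real.one_sub_inv_le_log_of_pos h1s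
    have hinv : (1 + s) * (1 + s)⁻¹ = 1 := mul_inv_cancel₀ h1s.ne'
    have hinvnn : 0 ≤ (1 + s)⁻¹ := inv_nonneg.mpr h1s.le
    nlinarith [hloglb, hinv, hinvnn, s0, s1]
  -- sum up and telescope
  have htel : ∑ t ∈ Finset.Icc 1 T, (f t - f (t - 1)) = f T - f 0 := by
    rw [sum_Icc_one T (fun t => f t - f (t - 1))]
    simp only [Nat.add_sub_cancel]
    exact Finset.sum_range_sub f T
  have hf0 : f 0 = Real.log (lam ^ d) := by
    rw [hf]
    simp only
    rw [hA 0]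
    simp [Matrix.det_smul]
  calc ∑ t ∈ Finset.Icc 1 T, x t ⬝ᵥ ((A (t - 1))⁻¹ *ᵥ x t)
      ≤ ∑ t ∈ Finset.Icc 1 T, 2 * (f t - f (t - 1)) := Finset.sum_le_sum step
    _ = 2 * ∑ t ∈ Finset.Icc 1 T, (f t - f (t - 1)) := (Finset.mul_sum _ _ _).symm
    _ = 2 * (f T - f 0) := by rw [htel]
    _ = 2 * Real.log ((A T).det / lam ^ d) := by
        rw [Real.log_div (hdetpos T).ne' (pow_pos hlam0 d).ne', hf0]
end

section
/- (Determinant bound; Lemma 10 of Abbasi-Yadkori et al., used as Lemma 4 in the paper.) Let λ > 0, d ≥ 1, let x_1, …, x_t ∈ ℝ^d satisfy ‖x_i‖₂ ≤ L for all i, and define A_t = λ I_d + Σ_{i=1}^t x_i x_iᵀ. Then det(A_t) ≤ (λ + t L² / d)^d. -/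
open Matrix Finset

lemma trace_eq_sum_eigs {d : ℕ} (A : Matrix (Fin d) (Fin d) ℝ) (hA : A.IsHermitian) :
    A.trace = ∑ i, hA.eigenvalues i := by
  conv_lhs => rw [hA.spectral_theorem, Unitary.conjStarAlgAut_apply]
  rw [Matrix.trace_mul_cycle, (Matrix.mem_unitaryGroup_iff').mp (hA.eigenvectorUnitary).2]
  simp [Matrix.trace_diagonal]

lemma vecMulVec_mulVec' {d : ℕ} (w v : Fin d → ℝ) :
    vecMulVec w w *ᵥ v = (w ⬝ᵥ v) • w := by
  ext j
  simp [vecMulVec, mulVec, dotProduct, Finset.mul_sum, mul_assoc, mul_comm, mul_left_comm]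

/-- Determinant bound (Lemma 10 of Abbasi-Yadkori et al.): if `‖x_i‖₂ ≤ L` for
`i = 1, …, t`, then `det (λ I + ∑_{i=1}^t x_i x_iᵀ) ≤ (λ + t L² / d)^d`. -/
theorem det_regularized_gram_le {d : ℕ} (hd : 1 ≤ d) (t : ℕ) (L lam : ℝ)
    (hlam : 0 < lam)
    (x : ℕ → Fin d → ℝ)
    (hx : ∀ i ∈ Finset.Icc 1 t, Real.sqrt (x i ⬝ᵥ x i) ≤ L) :
    (lam • (1 : Matrix (Fin d) (Fin d) ℝ)
        + ∑ i ∈ Finset.Icc 1 t, vecMulVec (x i) (x i)).det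
      ≤ (lam + t * L ^ 2 / d) ^ d := by
  set A : Matrix (Fin d) (Fin d) ℝ :=
    lam • (1 : Matrix (Fin d) (Fin d) ℝ) + ∑ i ∈ Finset.Icc 1 t, vecMulVec (x i) (x i) with hAdef
  have hdpos : (0:ℝ) < d := by exact_mod_cast hd
  -- positive semidefiniteness
  have hmv : ∀ v : Fin d → ℝ, A *ᵥ v = lam • v + ∑ i ∈ Finset.Icc 1 t, (x i ⬝ᵥ v) • x i := by
    intro v
    rw [hAdef, Matrix.add_mulVec, Matrix.smul_mulVec, Matrix.one_mulVec]
    congr 1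
    have hsum : ((∑ i ∈ Finset.Icc 1 t, vecMulVec (x i) (x i)) *ᵥ v)
        = ∑ i ∈ Finset.Icc 1 t, (vecMulVec (x i) (x i)) *ᵥ v := by
      ext j
      simp only [Matrix.mulVec, dotProduct, Matrix.sum_apply, Finset.sum_apply,
        Finset.sum_mul]
      exact Finset.sum_comm
    rw [hsum]
    exact Finset.sum_congr rfl fun i _ => vecMulVec_mulVec' _ _
  have hps : A.PosSemidef := by
    rw [posSemidef_iff_dotProduct_mulVec]
    constructor
    · show Aᴴ = A
      rw [hAdef, conjTranspose_add, conjTranspose_smul, conjTranspose_one]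
      congr 1
      rw [conjTranspose_sum]
      refine Finset.sum_congr rfl fun i _ => ?_
      ext a b
      simp [vecMulVec, mul_comm]
    · intro v
      rw [hmv]
      rw [star_trivial, dotProduct_add, dotProduct_smul]
      have hdsum : v ⬝ᵥ (∑ i ∈ Finset.Icc 1 t, (x i ⬝ᵥ v) • x i)
          = ∑ i ∈ Finset.Icc 1 t, (x i ⬝ᵥ v) * (v ⬝ᵥ x i) := by
        simp only [dotProduct, Finset.sum_apply, Pi.smul_apply, smul_eq_mul, Finset.mul_sum]
        rw [Finset.sum_comm]
        refine Finset.sum_congr rfl fun i _ => Finset.sum_congr rfl fun j _ => by ring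
      rw [hdsum, smul_eq_mul]
      have h1 : (0:ℝ) ≤ v ⬝ᵥ v := by
        simp only [dotProduct]
        exact Finset.sum_nonneg fun j _ => mul_self_nonneg _
      have h2 : (0:ℝ) ≤ ∑ i ∈ Finset.Icc 1 t, (x i ⬝ᵥ v) * (v ⬝ᵥ x i) := by
        refine Finset.sum_nonneg fun i _ => ?_
        rw [dotProduct_comm]
        exact mul_self_nonneg _
      exact add_nonneg (mul_nonneg hlam.le h1) h2
  have hA : A.IsHermitian := hps.isHermitian
  set μ : Fin d → ℝ := hA.eigenvalues with hμ
  have hμnn : ∀ i, 0 ≤ μ i := fun i => hps.eigenvalues_nonneg i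
  -- trace computation
  have htraceA : A.trace = lam * d + ∑ i ∈ Finset.Icc 1 t, x i ⬝ᵥ x i := by
    rw [hAdef, trace_add, trace_smul, trace_one, trace_sum]
    simp [Matrix.trace, Matrix.diag, vecMulVec, dotProduct, mul_comm]
  -- bound each norm squared
  have hnorm : ∀ i ∈ Finset.Icc 1 t, x i ⬝ᵥ x i ≤ L ^ 2 := by
    intro i hi
    have hnn : (0:ℝ) ≤ x i ⬝ᵥ x i := by
      simp only [dotProduct]; exact Finset.sum_nonneg fun j _ => mul_self_nonneg _
    calc x i ⬝ᵥ x i = Real.sqrt (x i ⬝ᵥ x i) ^ 2 := (Real.sq_sqrt hnn).symm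
      _ ≤ L ^ 2 := by
          have := hx i hi
          have h0 := Real.sqrt_nonneg (x i ⬝ᵥ x i)
          nlinarith
  have htr_le : A.trace ≤ lam * d + t * L ^ 2 := by
    rw [htraceA]
    gcongr
    calc ∑ i ∈ Finset.Icc 1 t, x i ⬝ᵥ x i ≤ ∑ _i ∈ Finset.Icc 1 t, L ^ 2 :=
          Finset.sum_le_sum hnorm
      _ = t * L ^ 2 := by rw [Finset.sum_const, Nat.card_Icc]; simp [nsmul_eq_mul]
  have htr_eq : A.trace = ∑ i, μ i := trace_eq_sum_eigs A hA
  -- AM-GM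
  set S : ℝ := ∑ i, μ i with hS
  have hSnn : 0 ≤ S := Finset.sum_nonneg fun i _ => hμnn i
  have hamgm : ∏ i, μ i ≤ (S / d) ^ d := by
    have hw : ∑ _i : Fin d, (d:ℝ)⁻¹ = 1 := by
      rw [Finset.sum_const]
      simp [nsmul_eq_mul, mul_inv_cancel₀ hdpos.ne']
    have h := Real.geom_mean_le_arith_mean_weighted Finset.univ (fun _ => (d:ℝ)⁻¹) μ
      (fun i _ => by positivity) hw (fun i _ => hμnn i)
    have hprod : ∏ i, μ i ^ ((d:ℝ)⁻¹) = (∏ i, μ i) ^ ((d:ℝ)⁻¹) :=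
      Real.finset_prod_rpow _ _ (fun i _ => hμnn i) _
    have hsum : ∑ i, (d:ℝ)⁻¹ * μ i = S / d := by
      rw [← Finset.mul_sum, ← hS, inv_mul_eq_div]
    rw [hprod, hsum] at h
    have hPnn : 0 ≤ ∏ i, μ i := Finset.prod_nonneg fun i _ => hμnn i
    have key : ∏ i, μ i = ((∏ i, μ i) ^ ((d:ℝ)⁻¹)) ^ (d:ℕ) := by
      rw [← Real.rpow_natCast ((∏ i, μ i) ^ ((d:ℝ)⁻¹)) d, ← Real.rpow_mul hPnn,
        inv_mul_cancel₀ hdpos.ne', Real.rpow_one]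
    rw [key]
    exact pow_le_pow_left₀ (Real.rpow_nonneg hPnn _) h d
  -- put it together
  have hdet : A.det = ∏ i, μ i := by
    rw [hA.det_eq_prod_eigenvalues]; norm_num; rfl
  rw [hdet]
  refine hamgm.trans ?_
  have hSd : S / d ≤ lam + t * L ^ 2 / d := by
    rw [div_le_iff₀ hdpos, add_mul, div_mul_cancel₀ _ hdpos.ne']
    calc S = A.trace := htr_eq.symm
      _ ≤ lam * d + t * L ^ 2 := htr_le
  exact pow_le_pow_left₀ (div_nonneg hSnn hdpos.le) hSd d
end

section
/- (Per-round regret of the Fair-LinUCB selection rule.) Let A be a d × d real positive definite matrix, α > 0, γ ≥ 0, and θ̂, θ* ∈ ℝ^d with ‖θ̂ − θ*‖_A ≤ α. Let 𝒜 be a nonempty finite set of arms with feature vectors x_a ∈ ℝ^d for a ∈ 𝒜, and let penalties P_a ∈ ℝ satisfy 0 ≤ P_a ≤ γ · α · min_{a' ∈ 𝒜} ‖x_{a'}‖_{A⁻¹} for every a ∈ 𝒜. Suppose the chosen arm â maximizes over a ∈ 𝒜 the index ⟨θ̂, x_a⟩ + α ‖x_a‖_{A⁻¹} + P_a. Then for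 every arm a* ∈ 𝒜, ⟨θ*, x_{a*}⟩ − ⟨θ*, x_â⟩ ≤ (2 + γ) · α · ‖x_â‖_{A⁻¹}. -/
open Matrix Finset

lemma dot_cs {d : ℕ} (u v : Fin d → ℝ) :
    u ⬝ᵥ v ≤ Real.sqrt (u ⬝ᵥ u) * Real.sqrt (v ⬝ᵥ v) := by
  have h := Finset.sum_mul_sq_le_sq_mul_sq Finset.univ u v
  have h1 : u ⬝ᵥ v ≤ |u ⬝ᵥ v| := le_abs_self _
  have h2 : |u ⬝ᵥ v| = Real.sqrt ((u ⬝ᵥ v) ^ 2) := (Real.sqrt_sq_eq_abs _).symm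
  calc u ⬝ᵥ v ≤ Real.sqrt ((u ⬝ᵥ v) ^ 2) := h2 ▸ h1
    _ ≤ Real.sqrt ((u ⬝ᵥ u) * (v ⬝ᵥ v)) := by
        apply Real.sqrt_le_sqrt
        simpa [dotProduct, pow_two, Finset.mul_sum, mul_comm, mul_left_comm] using h
    _ = Real.sqrt (u ⬝ᵥ u) * Real.sqrt (v ⬝ᵥ v) :=
        Real.sqrt_mul (Finset.sum_nonneg fun i _ => mul_self_nonneg _) _

lemma mv_dot_mv {d : ℕ} (M N : Matrix (Fin d) (Fin d) ℝ) (u v : Fin d → ℝ) :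
    (M *ᵥ u) ⬝ᵥ (N *ᵥ v) = u ⬝ᵥ ((Mᵀ * N) *ᵥ v) := by
  rw [← Matrix.vecMul_transpose M u, ← Matrix.dotProduct_mulVec, Matrix.mulVec_mulVec]

open scoped MatrixOrder in
lemma weighted_cs {d : ℕ} (A : Matrix (Fin d) (Fin d) ℝ) (hA : A.PosDef)
    (u v : Fin d → ℝ) :
    u ⬝ᵥ v ≤ Real.sqrt (u ⬝ᵥ (A *ᵥ u)) * Real.sqrt (v ⬝ᵥ (A⁻¹ *ᵥ v)) := by
  classical
  set S := CFC.sqrt A with hSdef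
  have hSherm : S.IsHermitian := (CFC.sqrt_nonneg A).posSemidef.1
  have hSsq : S * S = A := CFC.sqrt_mul_sqrt_self A hA.posSemidef.nonneg
  have hSdet : IsUnit S.det := by
    have hAdet : A.det ≠ 0 := hA.det_pos.ne'
    have : S.det * S.det = A.det := by rw [← Matrix.det_mul, hSsq]
    exact isUnit_iff_ne_zero.2 fun h => hAdet (by rw [← this, h, mul_zero])
  have hST : Sᵀ = S := hSherm.eq
  have huv : (S *ᵥ u) ⬝ᵥ (S⁻¹ *ᵥ v) = u ⬝ᵥ v := by
    rw [mv_dot_mv, hST, Matrix.mul_nonsing_inv _ hSdet, Matrix.one_mulVec]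
  have huu : (S *ᵥ u) ⬝ᵥ (S *ᵥ u) = u ⬝ᵥ (A *ᵥ u) := by
    rw [mv_dot_mv, hST, hSsq]
  have hvv : (S⁻¹ *ᵥ v) ⬝ᵥ (S⁻¹ *ᵥ v) = v ⬝ᵥ (A⁻¹ *ᵥ v) := by
    rw [mv_dot_mv, Matrix.transpose_nonsing_inv, hST,
      ← Matrix.mul_inv_rev, hSsq]
  calc u ⬝ᵥ v = (S *ᵥ u) ⬝ᵥ (S⁻¹ *ᵥ v) := huv.symm
    _ ≤ Real.sqrt ((S *ᵥ u) ⬝ᵥ (S *ᵥ u)) * Real.sqrt ((S⁻¹ *ᵥ v) ⬝ᵥ (S⁻¹ *ᵥ v)) :=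
        dot_cs _ _
    _ = _ := by rw [huu, hvv]

/-- Per-round regret of the Fair-LinUCB selection rule: if
`‖θ̂ - θ*‖_A ≤ α`, the penalties satisfy
`0 ≤ P_a ≤ γ α min_{a'} ‖x_{a'}‖_{A⁻¹}`, and the chosen arm `â` maximizes
`⟨θ̂, x_a⟩ + α ‖x_a‖_{A⁻¹} + P_a` over the arm set, then for every arm `a*`,
`⟨θ*, x_{a*}⟩ - ⟨θ*, x_â⟩ ≤ (2 + γ) α ‖x_â‖_{A⁻¹}`. -/
theorem fair_linucb_per_round_regret {d : ℕ} {ι : Type*}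
    (A : Matrix (Fin d) (Fin d) ℝ) (hA : A.PosDef)
    (α γ : ℝ) (hα : 0 < α) (hγ : 0 ≤ γ)
    (θhat θstar : Fin d → ℝ)
    (hconf : Real.sqrt ((θhat - θstar) ⬝ᵥ (A *ᵥ (θhat - θstar))) ≤ α)
    (𝒜 : Finset ι) (h𝒜 : 𝒜.Nonempty)
    (x : ι → Fin d → ℝ) (P : ι → ℝ)
    (hP : ∀ a ∈ 𝒜, 0 ≤ P a ∧
      P a ≤ γ * α * 𝒜.inf' h𝒜 fun a' => Real.sqrt (x a' ⬝ᵥ (A⁻¹ *ᵥ x a')))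
    (ahat : ι) (hahat : ahat ∈ 𝒜)
    (hmax : ∀ a ∈ 𝒜,
      θhat ⬝ᵥ x a + α * Real.sqrt (x a ⬝ᵥ (A⁻¹ *ᵥ x a)) + P a
        ≤ θhat ⬝ᵥ x ahat + α * Real.sqrt (x ahat ⬝ᵥ (A⁻¹ *ᵥ x ahat)) + P ahat) :
    ∀ astar ∈ 𝒜,
      θstar ⬝ᵥ x astar - θstar ⬝ᵥ x ahat
        ≤ (2 + γ) * α * Real.sqrt (x ahat ⬝ᵥ (A⁻¹ *ᵥ x ahat)) := by
  intro astar hastar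
  set u := θhat - θstar with hu
  set w := fun a => Real.sqrt (x a ⬝ᵥ (A⁻¹ *ᵥ x a)) with hw
  have hwnn : ∀ a, 0 ≤ w a := fun a => Real.sqrt_nonneg _
  have hnorm : Real.sqrt (u ⬝ᵥ (A *ᵥ u)) ≤ α := hconf
  have hcs : ∀ a, u ⬝ᵥ x a ≤ α * w a := by
    intro a
    calc u ⬝ᵥ x a ≤ Real.sqrt (u ⬝ᵥ (A *ᵥ u)) * w a := weighted_cs A hA u (x a)
      _ ≤ α * w a := mul_le_mul_of_nonneg_right hnorm (hwnn a)
  have hcs' : ∀ a, -(u ⬝ᵥ x a) ≤ α * w a := by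
    intro a
    have := weighted_cs A hA (-u) (x a)
    have hneg : (-u) ⬝ᵥ (A *ᵥ (-u)) = u ⬝ᵥ (A *ᵥ u) := by
      simp [Matrix.mulVec_neg]
    rw [neg_dotProduct, hneg] at this
    exact this.trans (mul_le_mul_of_nonneg_right hnorm (hwnn a))
  -- Estimate θ̂ difference from optimality
  have hopt := hmax astar hastar
  have hPstar := (hP astar hastar).1
  have hPhat := (hP ahat hahat).2
  have hinf_le : (𝒜.inf' h𝒜 fun a' => w a') ≤ w ahat := Finset.inf'_le _ hahat
  have hPhat' : P ahat ≤ γ * α * w ahat := by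
    refine hPhat.trans ?_
    exact mul_le_mul_of_nonneg_left hinf_le (by positivity)
  -- decompose
  have key : θstar ⬝ᵥ x astar - θstar ⬝ᵥ x ahat
      = (u ⬝ᵥ x ahat) + (-(u ⬝ᵥ x astar))
        + (θhat ⬝ᵥ x astar - θhat ⬝ᵥ x ahat) := by
    simp [hu, sub_dotProduct]
    ring
  rw [key]
  have hstep : θhat ⬝ᵥ x astar - θhat ⬝ᵥ x ahat
      ≤ α * w ahat + P ahat - α * w astar - P astar := by
    have := hmax astar hastar
    linarith
  have h1 := hcs ahat
  have h2 := hcs' astar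
  have hexp : (2 + γ) * α * w ahat = α * w ahat + α * w ahat + γ * α * w ahat := by ring
  rw [hexp]
  linarith
end
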